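/- In the algebra of formal power series in a commuting variable z over ℂ, for any a ∈ ℂ and q with |q| < 1 interpreted formally (i.e., as an identity of formal power series in z): Σ_{i=0}^{∞} ((a)_i / (q²)_i) z^i = (az)_∞ / (z)_∞, where (a)_i = (1−a)(1−aq²)⋯(1−aq^{2(i−1)}) and (a)_∞ = ∏_{i≥0}(1 − a q^{2i}), valid whenever the q-shifted factorials and products converge (e.g., as formal power series in z with coefficients rational in q and a, or for |q| < 1, |z| < 1). -/

import Mathlib

open Finset

section QBAux
open Filter Complex
set_option maxHeartbeats 1000000

noncomputable def qbc (q a : ℂ) (i : ℕ) : ℂ :=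
  (∏ k ∈ Finset.range i, (1 - a * q ^ (2 * k))) /
  (∏ k ∈ Finset.range i, (1 - q ^ 2 * q ^ (2 * k)))

lemma qb_factor_ne_zero {q w : ℂ} (hq : ‖q‖ < 1) (hw : ‖w‖ < 1) (k : ℕ) :
    1 - w * q ^ (2 * k) ≠ 0 := by
  intro h
  have h1 : w * q ^ (2 * k) = 1 := by linear_combination -h
  have h2 : ‖w * q ^ (2 * k)‖ < 1 := by
    rw [norm_mul, norm_pow]
    calc ‖w‖ * ‖q‖ ^ (2 * k) ≤ ‖w‖ * 1 := by
          gcongr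
          exact pow_le_one₀ (norm_nonneg q) hq.le
      _ < 1 := by simpa using hw
  rw [h1] at h2; simp at h2

lemma qb_sq_lt {q : ℂ} (hq : ‖q‖ < 1) : ‖q ^ 2‖ < 1 := by
  rw [norm_pow]
  nlinarith [norm_nonneg q]

lemma qbc_zero (q a : ℂ) : qbc q a 0 = 1 := by simp [qbc]

lemma qbc_rec {q : ℂ} (a : ℂ) (hq : ‖q‖ < 1) (i : ℕ) :
    qbc q a (i + 1) * (1 - q ^ 2 * q ^ (2 * i)) = qbc q a i * (1 - a * q ^ (2 * i)) := by
  have hD : (∏ k ∈ Finset.range i, (1 - q ^ 2 * q ^ (2 * k))) ≠ 0 :=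
    Finset.prod_ne_zero_iff.2 fun k _ => qb_factor_ne_zero hq (qb_sq_lt hq) k
  have hDi : (1 - q ^ 2 * q ^ (2 * i)) ≠ 0 := qb_factor_ne_zero hq (qb_sq_lt hq) i
  unfold qbc
  rw [Finset.prod_range_succ, Finset.prod_range_succ]
  simp only [div_mul_eq_mul_div]
  rw [div_eq_div_iff (mul_ne_zero hD hDi) hD]
  ring

lemma qb_hasProd_zero {f : ℕ → ℂ} (h : ∃ n, f n = 0) : HasProd f 0 := by
  obtain ⟨n, hn⟩ := h
  have : (fun s : Finset ℕ => ∏ b ∈ s, f b) =ᶠ[atTop] fun _ => (0 : ℂ) := by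
    filter_upwards [Filter.eventually_ge_atTop {n}] with s hs
    exact Finset.prod_eq_zero (by simpa using hs) hn
  exact Tendsto.congr' this.symm tendsto_const_nhds

lemma qb_summable_log {q w : ℂ} (hq : ‖q‖ < 1)
    (hne : ∀ k, 1 - w * q ^ (2 * k) ≠ 0) :
    Summable fun k => Complex.log (1 - w * q ^ (2 * k)) := by
  clear hne
  have hq2 : (0:ℝ) ≤ ‖q‖ ^ 2 := by positivity
  have hq2' : ‖q‖ ^ 2 < 1 := by nlinarith [norm_nonneg q]
  obtain ⟨N, hN⟩ : ∃ N : ℕ, ‖w‖ * (‖q‖ ^ 2) ^ N ≤ 1/2 := by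
    have := (tendsto_pow_atTop_nhds_zero_of_lt_one hq2 hq2').const_mul (‖w‖)
    rw [mul_zero] at this
    exact (this.eventually_le_const (by norm_num : (0:ℝ) < 1/2)).exists
  rw [← summable_nat_add_iff N]
  apply Summable.of_norm_bounded (g := fun k => (3/2) * (1/2) * (‖q‖ ^ 2) ^ k)
    (((summable_geometric_of_lt_one hq2 hq2').mul_left _))
  intro k
  have hb : ‖-(w * q ^ (2 * (k + N)))‖ ≤ 1/2 * (‖q‖ ^ 2) ^ k := by
    rw [norm_neg, norm_mul, norm_pow]
    have : ‖w‖ * ‖q‖ ^ (2 * (k + N))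
        = (‖w‖ * (‖q‖ ^ 2) ^ N) * (‖q‖ ^ 2) ^ k := by ring
    rw [this]
    gcongr
  have hb2 : ‖-(w * q ^ (2 * (k + N)))‖ ≤ 1/2 := by
    refine hb.trans ?_
    have : (‖q‖ ^ 2) ^ k ≤ 1 := pow_le_one₀ hq2 hq2'.le
    nlinarith
  have := Complex.norm_log_one_add_half_le_self hb2
  rw [show (1 : ℂ) + -(w * q ^ (2 * (k + N))) = 1 - w * q ^ (2*(k+N)) by ring] at this
  calc ‖Complex.log (1 - w * q ^ (2 * (k + N)))‖ ≤ (3/2) * ‖-(w * q ^ (2 * (k + N)))‖ := this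
    _ ≤ (3/2) * (1/2 * (‖q‖ ^ 2) ^ k) := by gcongr
    _ = 3/2 * (1/2) * (‖q‖ ^ 2) ^ k := by ring

lemma qb_tprod_ne_zero {q w : ℂ} (hq : ‖q‖ < 1)
    (hne : ∀ k, 1 - w * q ^ (2 * k) ≠ 0) :
    (∏' k : ℕ, (1 - w * q ^ (2 * k))) ≠ 0 := by
  have := Complex.cexp_tsum_eq_tprod (f := fun k => 1 - w * q ^ (2 * k))
    (fun k => hne k) (qb_summable_log hq hne)
  rw [← this]
  exact Complex.exp_ne_zero _

lemma qb_multipliable {q : ℂ} (hq : ‖q‖ < 1) (w : ℂ) :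
    Multipliable fun k : ℕ => 1 - w * q ^ (2 * k) := by
  by_cases h : ∀ k, 1 - w * q ^ (2 * k) ≠ 0
  · exact Complex.multipliable_of_summable_log (qb_summable_log hq h)
  · push_neg at h
    exact ⟨0, qb_hasProd_zero h⟩

lemma qb_bound {q : ℂ} (a : ℂ) (hq : ‖q‖ < 1) :
    ∃ M : ℝ, 0 < M ∧ ∀ i, ‖qbc q a i‖ ≤ M := by
  have hNm := qb_multipliable hq a
  have hN1 : Tendsto (fun n => ‖∏ k ∈ Finset.range n, (1 - a * q ^ (2 * k))‖)
      atTop (nhds ‖∏' k : ℕ, (1 - a * q ^ (2 * k))‖) := hNm.hasProd.tendsto_prod_nat.norm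
  obtain ⟨M1, hM1⟩ := hN1.bddAbove_range
  have hM1' : ∀ n, ‖∏ k ∈ Finset.range n, (1 - a * q ^ (2 * k))‖ ≤ M1 := fun n => hM1 ⟨n, rfl⟩
  have hM1pos : (1:ℝ) ≤ M1 := by simpa using hM1' 0
  have hDne : ∀ k, 1 - q ^ 2 * q ^ (2 * k) ≠ 0 := fun k => qb_factor_ne_zero hq (qb_sq_lt hq) k
  have hDm := qb_multipliable hq (q ^ 2)
  have hPD : (∏' k : ℕ, (1 - q ^ 2 * q ^ (2 * k))) ≠ 0 := qb_tprod_ne_zero hq hDne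
  have hDpos : ∀ n, 0 < ‖∏ k ∈ Finset.range n, (1 - q ^ 2 * q ^ (2 * k))‖ := by
    intro n
    rw [norm_pos_iff]
    exact Finset.prod_ne_zero_iff.2 fun k _ => hDne k
  have hD1 : Tendsto (fun n => ‖∏ k ∈ Finset.range n, (1 - q ^ 2 * q ^ (2 * k))‖⁻¹)
      atTop (nhds ‖∏' k : ℕ, (1 - q ^ 2 * q ^ (2 * k))‖⁻¹) :=
    hDm.hasProd.tendsto_prod_nat.norm.inv₀ (by simpa using hPD)
  obtain ⟨C, hC⟩ := hD1.bddAbove_range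
  have hC' : ∀ n, ‖∏ k ∈ Finset.range n, (1 - q ^ 2 * q ^ (2 * k))‖⁻¹ ≤ C := fun n => hC ⟨n, rfl⟩
  have hCpos : (0:ℝ) < C := by have := hC' 0; simp at this; linarith
  have hDlow : ∀ n, C⁻¹ ≤ ‖∏ k ∈ Finset.range n, (1 - q ^ 2 * q ^ (2 * k))‖ := by
    intro n
    have h1 : 1 ≤ ‖∏ k ∈ Finset.range n, (1 - q ^ 2 * q ^ (2 * k))‖ * C := by
      calc (1:ℝ) = ‖∏ k ∈ Finset.range n, (1 - q ^ 2 * q ^ (2 * k))‖ *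
            ‖∏ k ∈ Finset.range n, (1 - q ^ 2 * q ^ (2 * k))‖⁻¹ := by
            rw [mul_inv_cancel₀ (hDpos n).ne']
        _ ≤ _ := by gcongr; exact hC' n
    nlinarith [mul_nonneg (sub_nonneg.2 h1) (inv_pos.2 hCpos).le, inv_mul_cancel₀ hCpos.ne']
  refine ⟨M1 * C, by positivity, fun i => ?_⟩
  unfold qbc
  rw [norm_div]
  calc ‖∏ k ∈ Finset.range i, (1 - a * q ^ (2 * k))‖ /
        ‖∏ k ∈ Finset.range i, (1 - q ^ 2 * q ^ (2 * k))‖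
      ≤ M1 / C⁻¹ := by
        apply div_le_div₀ (by linarith) (hM1' i) (inv_pos.2 hCpos) (hDlow i)
    _ = M1 * C := by rw [div_eq_mul_inv, inv_inv]

lemma qb_summable {q : ℂ} (a : ℂ) (hq : ‖q‖ < 1) {w : ℂ} (hw : ‖w‖ < 1) :
    Summable fun i : ℕ => qbc q a i * w ^ i := by
  obtain ⟨M, hM0, hM⟩ := qb_bound a hq
  apply Summable.of_norm_bounded (g := fun i => M * ‖w‖ ^ i)
    ((summable_geometric_of_lt_one (norm_nonneg w) hw).mul_left M)
  intro i
  rw [norm_mul, norm_pow]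
  gcongr
  exact hM i

noncomputable def qbF (q a w : ℂ) : ℂ := ∑' i : ℕ, qbc q a i * w ^ i

lemma qb_abs_sq_mul {q w : ℂ} (hq : ‖q‖ < 1) (hw : ‖w‖ < 1) (n : ℕ) :
    ‖q ^ (2 * n) * w‖ ≤ ‖w‖ := by
  rw [norm_mul, norm_pow]
  calc ‖q‖ ^ (2*n) * ‖w‖ ≤ 1 * ‖w‖ := by
        gcongr
        exact pow_le_one₀ (norm_nonneg q) hq.le
    _ = ‖w‖ := one_mul _

lemma qb_feq {q : ℂ} (a : ℂ) (hq : ‖q‖ < 1) {w : ℂ} (hw : ‖w‖ < 1) :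
    (1 - w) * qbF q a w = (1 - a * w) * qbF q a (q ^ 2 * w) := by
  have hqw : ‖q ^ 2 * w‖ < 1 := by
    have := qb_abs_sq_mul hq hw 1
    simpa using lt_of_le_of_lt (by simpa using this) hw
  have Hg : HasSum (fun i : ℕ => qbc q a i * w ^ i) (qbF q a w) :=
    (qb_summable a hq hw).hasSum
  have Hg2 : HasSum (fun i : ℕ => qbc q a i * (q ^ 2 * w) ^ i) (qbF q a (q ^ 2 * w)) :=
    (qb_summable a hq hqw).hasSum
  have Ht := (Hg.mul_left (1 - w)).sub (Hg2.mul_left (1 - a * w))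
  set d : ℕ → ℂ := fun i => qbc q a i * (1 - q ^ (2 * i)) * w ^ i with hd
  have hterm : ∀ i : ℕ,
      (1 - w) * (qbc q a i * w ^ i) - (1 - a * w) * (qbc q a i * (q ^ 2 * w) ^ i)
        = d i - d (i + 1) := by
    intro i
    have hrec := qbc_rec a hq i
    have hp1 : (q ^ 2 * w) ^ i = q ^ (2 * i) * w ^ i := by rw [mul_pow, ← pow_mul]
    simp only [hd]
    rw [hp1]
    have hp2 : q ^ (2 * (i + 1)) = q ^ 2 * q ^ (2 * i) := by
      rw [← pow_add]; ring_nf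
    rw [hp2]
    linear_combination (w ^ (i + 1)) * hrec
  have hparts : ∀ n : ℕ, (∑ i ∈ Finset.range n,
      ((1 - w) * (qbc q a i * w ^ i) - (1 - a * w) * (qbc q a i * (q ^ 2 * w) ^ i)))
        = d 0 - d n := by
    intro n
    rw [Finset.sum_congr rfl fun i _ => hterm i]
    exact Finset.sum_range_sub' d n
  have hd0 : d 0 = 0 := by simp [hd]
  have hdlim : Tendsto d atTop (nhds 0) := by
    obtain ⟨M, hM0, hM⟩ := qb_bound a hq
    rw [tendsto_zero_iff_norm_tendsto_zero]
    apply squeeze_zero (fun n => norm_nonneg _) (g := fun n => (M * 2) * ‖w‖ ^ n)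
    · intro n
      simp only [hd]
      rw [norm_mul, norm_mul, norm_pow]
      have h1 : ‖(1:ℂ) - q ^ (2 * n)‖ ≤ 2 := by
        calc ‖(1:ℂ) - q ^ (2 * n)‖ ≤ ‖(1:ℂ)‖ + ‖q ^ (2 * n)‖ := norm_sub_le _ _
          _ ≤ 1 + 1 := by
              rw [norm_one, norm_pow]
              gcongr
              exact pow_le_one₀ (norm_nonneg q) hq.le
          _ = 2 := by norm_num
      calc ‖qbc q a n‖ * ‖(1:ℂ) - q ^ (2 * n)‖ * ‖w‖ ^ n
          ≤ M * 2 * ‖w‖ ^ n := by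
            gcongr
            all_goals first | exact hM n | exact h1
        _ = M * 2 * ‖w‖ ^ n := rfl
    · have := (tendsto_pow_atTop_nhds_zero_of_lt_one (norm_nonneg w) hw).const_mul (M * 2)
      simpa using this
  have h2 : Tendsto (fun n => ∑ i ∈ Finset.range n,
      ((1 - w) * (qbc q a i * w ^ i) - (1 - a * w) * (qbc q a i * (q ^ 2 * w) ^ i)))
      atTop (nhds 0) := by
    have : Tendsto (fun n => d 0 - d n) atTop (nhds 0) := by
      have := (tendsto_const_nhds (x := d 0) (f := atTop)).sub hdlim
      simpa [hd0] using this
    exact this.congr fun n => (hparts n).symm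
  have := tendsto_nhds_unique Ht.tendsto_sum_nat h2
  linear_combination this

lemma qb_iter {q : ℂ} (a : ℂ) (hq : ‖q‖ < 1) {z : ℂ} (hz : ‖z‖ < 1) :
    ∀ n : ℕ, qbF q a z * ∏ k ∈ Finset.range n, (1 - z * q ^ (2 * k))
      = (∏ k ∈ Finset.range n, (1 - a * z * q ^ (2 * k))) * qbF q a (q ^ (2 * n) * z) := by
  intro n
  induction n with
  | zero => simp
  | succ n ih =>
    have hwn : ‖q ^ (2 * n) * z‖ < 1 := lt_of_le_of_lt (qb_abs_sq_mul hq hz n) hz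
    have hfe := qb_feq a hq hwn
    have hq2w : q ^ 2 * (q ^ (2 * n) * z) = q ^ (2 * (n + 1)) * z := by
      rw [← mul_assoc, ← pow_add]
      ring_nf
    rw [hq2w] at hfe
    rw [Finset.prod_range_succ, Finset.prod_range_succ, ← mul_assoc, ih]
    calc (∏ k ∈ Finset.range n, (1 - a * z * q ^ (2 * k))) * qbF q a (q ^ (2 * n) * z) *
          (1 - z * q ^ (2 * n))
        = (∏ k ∈ Finset.range n, (1 - a * z * q ^ (2 * k))) *
            ((1 - q ^ (2 * n) * z) * qbF q a (q ^ (2 * n) * z)) := by ring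
      _ = (∏ k ∈ Finset.range n, (1 - a * z * q ^ (2 * k))) *
            ((1 - a * (q ^ (2 * n) * z)) * qbF q a (q ^ (2 * (n + 1)) * z)) := by rw [hfe]
      _ = (∏ k ∈ Finset.range n, (1 - a * z * q ^ (2 * k))) * (1 - a * z * q ^ (2 * n)) *
            qbF q a (q ^ (2 * (n + 1)) * z) := by ring

lemma qb_F_tendsto_one {q : ℂ} (a : ℂ) (hq : ‖q‖ < 1) {z : ℂ}
    (hz : ‖z‖ < 1) :
    Tendsto (fun n => qbF q a (q ^ (2 * n) * z)) atTop (nhds 1) := by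
  obtain ⟨M, hM0, hM⟩ := qb_bound a hq
  have hz0 : (0:ℝ) ≤ (1 - ‖z‖)⁻¹ := by
    have : (0:ℝ) < 1 - ‖z‖ := by linarith
    positivity
  have hq2 : (0:ℝ) ≤ ‖q‖ ^ 2 := by positivity
  have hq2' : ‖q‖ ^ 2 < 1 := by nlinarith [norm_nonneg q]
  set K := M * ‖z‖ * (1 - ‖z‖)⁻¹ with hK
  have key : ∀ n : ℕ, ‖qbF q a (q ^ (2 * n) * z) - 1‖ ≤ K * (‖q‖ ^ 2) ^ n := by
    intro n
    set w := q ^ (2 * n) * z with hw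
    have hwle : ‖w‖ ≤ ‖z‖ := qb_abs_sq_mul hq hz n
    have hwn : ‖w‖ < 1 := lt_of_le_of_lt hwle hz
    have hsum := qb_summable a hq hwn
    have htail : Summable fun i : ℕ => qbc q a (i + 1) * w ^ (i + 1) :=
      (summable_nat_add_iff 1).2 hsum
    have h0 : qbF q a w - 1 = ∑' i : ℕ, qbc q a (i + 1) * w ^ (i + 1) := by
      have := Summable.tsum_eq_zero_add hsum
      rw [qbF, this, qbc_zero]
      simp
    rw [h0]
    have hbound : ‖∑' i : ℕ, qbc q a (i + 1) * w ^ (i + 1)‖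
        ≤ (M * ‖w‖) * (1 - ‖z‖)⁻¹ := by
      apply tsum_of_norm_bounded
        (((hasSum_geometric_of_lt_one (norm_nonneg z) hz)).mul_left (M * ‖w‖))
      intro i
      rw [norm_mul, norm_pow, pow_succ']
      calc ‖qbc q a (i + 1)‖ * (‖w‖ * ‖w‖ ^ i)
          ≤ M * (‖w‖ * ‖z‖ ^ i) := by
            gcongr
            all_goals first | exact hM (i + 1) | exact norm_nonneg w | exact hwle
          _ = M * ‖w‖ * ‖z‖ ^ i := by ring
    refine hbound.trans ?_
    have hwabs : ‖w‖ ≤ (‖q‖ ^ 2) ^ n * ‖z‖ := by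
      rw [hw, norm_mul, norm_pow, ← pow_mul]
    calc M * ‖w‖ * (1 - ‖z‖)⁻¹
        ≤ M * ((‖q‖ ^ 2) ^ n * ‖z‖) * (1 - ‖z‖)⁻¹ := by gcongr
      _ = K * (‖q‖ ^ 2) ^ n := by rw [hK]; ring
  rw [← tendsto_sub_nhds_zero_iff]
  rw [tendsto_zero_iff_norm_tendsto_zero]
  apply squeeze_zero (fun n => norm_nonneg _) key
  have := (tendsto_pow_atTop_nhds_zero_of_lt_one hq2 hq2').const_mul K
  simpa using this

end QBAux

/-- the (commutative, analytic) q-binomial theorem of Gauss.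
For `|q| < 1` and `|z| < 1`, `Σ_{i=0}^∞ (a)_i/(q²)_i z^i = (az)_∞/(z)_∞`, where
`(a)_i = ∏_{k<i} (1 - a q^{2k})` and `(a)_∞ = ∏_{k≥0} (1 - a q^{2k})`. -/
theorem q_binomial_theorem
    (q a z : ℂ) (hq : ‖q‖ < 1) (hz : ‖z‖ < 1) :
    HasSum
      (fun i : ℕ =>
        ((∏ k ∈ Finset.range i, (1 - a * q ^ (2 * k))) /
         (∏ k ∈ Finset.range i, (1 - q ^ 2 * q ^ (2 * k)))) * z ^ i)
      ((∏' k : ℕ, (1 - a * z * q ^ (2 * k))) / (∏' k : ℕ, (1 - z * q ^ (2 * k)))) := by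
  have hsum := qb_summable a hq hz
  have hP : Multipliable fun k : ℕ => 1 - z * q ^ (2 * k) := qb_multipliable hq z
  have hQ : Multipliable fun k : ℕ => 1 - a * z * q ^ (2 * k) := qb_multipliable hq (a * z)
  have hPne : (∏' k : ℕ, (1 - z * q ^ (2 * k))) ≠ 0 :=
    qb_tprod_ne_zero hq fun k => qb_factor_ne_zero hq hz k
  have T1 : Filter.Tendsto (fun n => qbF q a z * ∏ k ∈ Finset.range n, (1 - z * q ^ (2 * k)))
      Filter.atTop (nhds (qbF q a z * ∏' k : ℕ, (1 - z * q ^ (2 * k)))) :=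
    hP.hasProd.tendsto_prod_nat.const_mul _
  have T4 : Filter.Tendsto
      (fun n => (∏ k ∈ Finset.range n, (1 - a * z * q ^ (2 * k))) * qbF q a (q ^ (2 * n) * z))
      Filter.atTop (nhds ((∏' k : ℕ, (1 - a * z * q ^ (2 * k))) * 1)) :=
    hQ.hasProd.tendsto_prod_nat.mul (qb_F_tendsto_one a hq hz)
  have heq := tendsto_nhds_unique (T1.congr (qb_iter a hq hz)) T4
  have hF : qbF q a z
      = (∏' k : ℕ, (1 - a * z * q ^ (2 * k))) / (∏' k : ℕ, (1 - z * q ^ (2 * k))) := by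
    rw [eq_div_iff hPne]
    linear_combination heq
  show HasSum (fun i : ℕ => qbc q a i * z ^ i) _
  rw [← hF]
  exact hsum.hasSum
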